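/- (Intermediate asymptotics of iterated logarithms) Let a fully-connected layered feed-forward network of depth L with one source and one sink have activation f(x) = e^x − 1 and weight family W ∈ W_o, with measured function F = F^L_1. Then for every l ∈ {0,…,L−2}, the quantity log^{∘(L−l)}(F(x)) − Σ_{j ∈ N^l} w^{l+1}_{1j} F^l_j(x) is eventually well defined and converges to log(w^{l+2}_{11}) as x → +∞, where log^{∘m} denotes the m-fold iterate of the natural logarithm. -/

import Mathlib

open Finset Filter

/-- Node outputs of the fully-connected layered feed-forward network with activation
`f x = e^x - 1` and layer sizes `n 0, …, n L`: `expOut n w 0 i x = x` (the source) and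
`expOut n w (l+1) i x = exp (∑_{j < n l} w^{l+1}_{ij} · expOut n w l j x) - 1`, where
`w (l+1) i j` is the weight of the edge from node `j` of layer `l` to node `i` of layer
`l + 1` (nodes are numbered `0, …, n l - 1`; the "first" node of a layer is node `0`). -/
noncomputable def expOut (n : ℕ → ℕ) (w : ℕ → ℕ → ℕ → ℝ) : ℕ → ℕ → ℝ → ℝ
  | 0, _, x => x
  | l + 1, i, x =>
      Real.exp (∑ j ∈ Finset.range (n l), w (l + 1) i j * expOut n w l j x) - 1

/-- The class `W_o` of weight families: all weights are positive and, in each layer and for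
each source node `j`, the weights are strictly decreasing in the destination node index
(`w^l_{1j} > w^l_{2j} > … > w^l_{n_l j}` in 1-based notation). -/
def Wo (L : ℕ) (n : ℕ → ℕ) (w : ℕ → ℕ → ℕ → ℝ) : Prop :=
  (∀ l < L, ∀ i < n (l + 1), ∀ j < n l, 0 < w (l + 1) i j) ∧
  (∀ l < L, ∀ j < n l, ∀ i i' : ℕ, i < i' → i' < n (l + 1) → w (l + 1) i' j < w (l + 1) i j)

noncomputable def innerSum (n : ℕ → ℕ) (w : ℕ → ℕ → ℕ → ℝ) (l i : ℕ) (x : ℝ) : ℝ :=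
  ∑ j ∈ Finset.range (n l), w (l + 1) i j * expOut n w l j x

lemma expOut_succ (n : ℕ → ℕ) (w : ℕ → ℕ → ℕ → ℝ) (l i : ℕ) (x : ℝ) :
    expOut n w (l + 1) i x = Real.exp (innerSum n w l i x) - 1 := rfl

lemma sum_tendsto_atTop {ι : Type*} {s : Finset ι} {g : ι → ℝ → ℝ} (i0 : ι)
    (hi0 : i0 ∈ s) (h : ∀ i ∈ s, Tendsto (g i) atTop atTop) :
    Tendsto (fun x => ∑ i ∈ s, g i x) atTop atTop := by
  refine tendsto_atTop_mono' _ ?_ (h i0 hi0)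
  have hev : ∀ᶠ x in atTop, ∀ i ∈ s, 0 ≤ g i x := by
    rw [eventually_all_finset]
    exact fun i hi => (h i hi).eventually_ge_atTop 0
  filter_upwards [hev] with x hx
  exact Finset.single_le_sum (fun i hi => hx i hi) hi0

lemma expOut_tendsto (L : ℕ) (n : ℕ → ℕ) (hpos : ∀ l ≤ L, 0 < n l)
    (w : ℕ → ℕ → ℕ → ℝ)
    (hw1 : ∀ l < L, ∀ i < n (l + 1), ∀ j < n l, 0 < w (l + 1) i j) :
    ∀ l ≤ L, ∀ k < n l, Tendsto (expOut n w l k) atTop atTop := by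
  intro l
  induction l with
  | zero =>
    intro _ k _
    exact (tendsto_id : Tendsto (fun x : ℝ => x) atTop atTop)
  | succ l ih =>
    intro hl k hk
    have hl' : l ≤ L := Nat.le_of_succ_le hl
    have hlL : l < L := hl
    have hsum : Tendsto (innerSum n w l k) atTop atTop := by
      refine sum_tendsto_atTop 0 ?_ ?_
      · exact Finset.mem_range.mpr (hpos l hl')
      · intro j hj
        have hj' := Finset.mem_range.mp hj
        exact (ih hl' j hj').const_mul_atTop (hw1 l hlL k hk j hj')
    have : Tendsto (fun x => Real.exp (innerSum n w l k x) - 1) atTop atTop := by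
      have := Real.tendsto_exp_atTop.comp hsum
      simpa [sub_eq_add_neg] using tendsto_atTop_add_const_right atTop (-1) this
    exact this

lemma innerSum_tendsto (L : ℕ) (n : ℕ → ℕ) (hpos : ∀ l ≤ L, 0 < n l)
    (w : ℕ → ℕ → ℕ → ℝ)
    (hw1 : ∀ l < L, ∀ i < n (l + 1), ∀ j < n l, 0 < w (l + 1) i j)
    (l : ℕ) (hl : l < L) (i : ℕ) (hi : i < n (l + 1)) :
    Tendsto (innerSum n w l i) atTop atTop := by
  refine sum_tendsto_atTop 0 (Finset.mem_range.mpr (hpos l hl.le)) ?_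
  intro j hj
  have hj' := Finset.mem_range.mp hj
  exact (expOut_tendsto L n hpos w hw1 l hl.le j hj').const_mul_atTop
    (hw1 l hl i hi j hj')

lemma iter_log_tendsto {F : ℝ → ℝ} (hF : Tendsto F atTop atTop) (m : ℕ) :
    Tendsto (fun x => Real.log^[m] (F x)) atTop atTop := by
  induction m with
  | zero => simpa using hF
  | succ m ih =>
    simp only [Function.iterate_succ_apply']
    exact Real.tendsto_log_atTop.comp ih

lemma key_lemma (L : ℕ) (n : ℕ → ℕ) (hpos : ∀ l ≤ L, 0 < n l)
    (w : ℕ → ℕ → ℕ → ℝ) (hw : Wo L n w) :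
    ∀ d l, l + 1 + d = L →
      Tendsto
        (fun x => Real.log^[d + 1] (expOut n w L 0 x) - innerSum n w l 0 x)
        atTop (nhds (if d = 0 then 0 else Real.log (w (l + 2) 0 0))) := by
  intro d
  induction d with
  | zero =>
    intro l hlL
    have hLeq : L = l + 1 := by omega
    subst hLeq
    simp only [if_pos rfl]
    have hS : Tendsto (innerSum n w l 0) atTop atTop :=
      innerSum_tendsto (l + 1) n hpos w hw.1 l (by omega) 0 (hpos (l + 1) le_rfl)
    have hexp : Tendsto (fun x => Real.exp (-(innerSum n w l 0 x))) atTop (nhds 0) :=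
      Real.tendsto_exp_atBot.comp (tendsto_neg_atTop_atBot.comp hS)
    have hlim : Tendsto (fun x => Real.log (1 - Real.exp (-(innerSum n w l 0 x))))
        atTop (nhds 0) := by
      have h1 : Tendsto (fun x => 1 - Real.exp (-(innerSum n w l 0 x))) atTop (nhds 1) := by
        simpa using tendsto_const_nhds.sub hexp
      have := (Real.continuousAt_log one_ne_zero).tendsto.comp h1
      rw [Real.log_one] at this
      exact this
    refine Tendsto.congr' ?_ hlim
    filter_upwards [hS.eventually_gt_atTop 0] with x hx
    have hE : (1 : ℝ) < Real.exp (innerSum n w l 0 x) := by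
      rw [← Real.exp_zero]; exact Real.exp_lt_exp.mpr hx
    have h2 : Real.exp (innerSum n w l 0 x) - 1 ≠ 0 := ne_of_gt (by linarith)
    have hbase : Real.log (Real.exp (innerSum n w l 0 x) - 1) - innerSum n w l 0 x =
        Real.log (1 - Real.exp (-(innerSum n w l 0 x))) := by
      have hprod : (Real.exp (innerSum n w l 0 x) - 1) * Real.exp (-(innerSum n w l 0 x)) =
          1 - Real.exp (-(innerSum n w l 0 x)) := by
        rw [Real.exp_neg]
        field_simp
      rw [← hprod, Real.log_mul h2 (Real.exp_ne_zero _), Real.log_exp]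
      ring
    simp only [zero_add, Function.iterate_one, expOut_succ]
    rw [hbase]
  | succ d ih =>
    intro l hlL
    have hl2L : l + 2 ≤ L := by omega
    have ihl := ih (l + 1) (by omega)
    set S : ℝ → ℝ := innerSum n w l 0 with hSdef
    set a : ℝ := w (l + 2) 0 0 with hadef
    have ha : 0 < a := hw.1 (l + 1) (by omega) 0 (hpos (l + 2) (by omega)) 0
      (hpos (l + 1) (by omega))
    have hS : Tendsto S atTop atTop :=
      innerSum_tendsto L n hpos w hw.1 l (by omega) 0 (hpos (l + 1) (by omega))
    have hexp : Tendsto (fun x => Real.exp (-(S x))) atTop (nhds 0) :=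
      Real.tendsto_exp_atBot.comp (tendsto_neg_atTop_atBot.comp hS)
    -- part 1
    have hpart1 : Tendsto
        (fun x => (Real.log^[d + 1] (expOut n w L 0 x) - innerSum n w (l + 1) 0 x) *
          Real.exp (-(S x))) atTop (nhds 0) := by
      simpa using ihl.mul hexp
    -- per-term limits for part 2
    have hterm : ∀ j ∈ Finset.range (n (l + 1)),
        Tendsto (fun x => w (l + 2) 0 j *
            (Real.exp (innerSum n w l j x - S x) - Real.exp (-(S x)))) atTop
          (nhds (if j = 0 then a else 0)) := by
      intro j hj
      have hjn := Finset.mem_range.mp hj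
      rcases Nat.eq_zero_or_pos j with rfl | hj0
      · simp only [if_pos rfl, hSdef, sub_self, Real.exp_zero]
        have : Tendsto (fun x => w (l + 2) 0 0 * (1 - Real.exp (-(innerSum n w l 0 x))))
            atTop (nhds (w (l + 2) 0 0 * (1 - 0))) :=
          tendsto_const_nhds.mul (tendsto_const_nhds.sub hexp)
        simpa using this
      · rw [if_neg hj0.ne']
        have hdiff : Tendsto (fun x => S x - innerSum n w l j x) atTop atTop := by
          have heq : ∀ x, S x - innerSum n w l j x =
              ∑ k ∈ Finset.range (n l),
                (w (l + 1) 0 k - w (l + 1) j k) * expOut n w l k x := by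
            intro x
            simp only [hSdef, innerSum, ← Finset.sum_sub_distrib, sub_mul]
          simp only [heq]
          refine sum_tendsto_atTop 0 (Finset.mem_range.mpr (hpos l (by omega))) ?_
          intro k hk
          have hk' := Finset.mem_range.mp hk
          have hcoef : 0 < w (l + 1) 0 k - w (l + 1) j k := by
            have := hw.2 l (by omega) k hk' 0 j hj0 hjn
            linarith
          exact (expOut_tendsto L n hpos w hw.1 l (by omega) k hk').const_mul_atTop hcoef
        have hbot : Tendsto (fun x => innerSum n w l j x - S x) atTop atBot := by
          have h4 : (fun x => innerSum n w l j x - S x) =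
              (fun x => -(S x - innerSum n w l j x)) := funext fun x => by ring
          rw [h4]
          exact tendsto_neg_atTop_atBot.comp hdiff
        have h0 : Tendsto (fun x => Real.exp (innerSum n w l j x - S x)) atTop (nhds 0) :=
          Real.tendsto_exp_atBot.comp hbot
        have : Tendsto (fun x => w (l + 2) 0 j *
            (Real.exp (innerSum n w l j x - S x) - Real.exp (-(S x)))) atTop
            (nhds (w (l + 2) 0 j * (0 - 0))) :=
          tendsto_const_nhds.mul (h0.sub hexp)
        simpa using this
    have hpart2 : Tendsto (fun x => innerSum n w (l + 1) 0 x * Real.exp (-(S x)))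
        atTop (nhds a) := by
      have hsum := tendsto_finset_sum (Finset.range (n (l + 1))) hterm
      have hval : (∑ j ∈ Finset.range (n (l + 1)),
          (if j = 0 then a else 0)) = a := by
        rw [Finset.sum_ite_eq' (Finset.range (n (l + 1))) 0 (fun _ => a)]
        simp [Finset.mem_range.mpr (hpos (l + 1) (by omega))]
      rw [hval] at hsum
      refine Tendsto.congr (fun x => ?_) hsum
      simp only [innerSum, Finset.sum_mul]
      refine Finset.sum_congr rfl fun j hj => ?_
      rw [expOut_succ, innerSum, Real.exp_sub, Real.exp_neg]
      have h3 := Real.exp_ne_zero (∑ j ∈ Finset.range (n l), w (l + 1) 0 j * expOut n w l j x)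
      field_simp
    have hclaim : Tendsto
        (fun x => Real.log^[d + 1] (expOut n w L 0 x) * Real.exp (-(S x)))
        atTop (nhds a) := by
      have := hpart1.add hpart2
      rw [zero_add] at this
      refine Tendsto.congr (fun x => ?_) this
      ring
    have hGpos : ∀ᶠ x in atTop, 0 < Real.log^[d + 1] (expOut n w L 0 x) := by
      filter_upwards [hclaim.eventually (eventually_gt_nhds ha)] with x hx
      nlinarith [Real.exp_pos (-(S x))]
    rw [if_neg (Nat.succ_ne_zero d)]
    have hlog := (Real.continuousAt_log ha.ne').tendsto.comp hclaim
    have heq : (fun x => Real.log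
          (Real.log^[d + 1] (expOut n w L 0 x) * Real.exp (-(S x)))) =ᶠ[atTop]
        (fun x => Real.log^[d + 1 + 1] (expOut n w L 0 x) - innerSum n w l 0 x) := by
      filter_upwards [hGpos] with x hx
      rw [Real.log_mul (ne_of_gt hx) (Real.exp_ne_zero _), Real.log_exp,
        Function.iterate_succ_apply' Real.log (d + 1)]
      simp only [hSdef]
      ring
    exact Tendsto.congr' heq hlog

/-- **(Intermediate asymptotics of iterated logarithms).** For a fully-connected layered
feed-forward network of depth `L ≥ 1` with one source and one sink, activation
`f x = e^x - 1`, weight family `W ∈ W_o` and measured function `F = F^L_1 = expOut n w L 0`,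
for every `l ∈ {0, …, L-2}` the quantity
`log^{∘(L-l)} (F x) - ∑_{j ∈ N^l} w^{l+1}_{1j} F^l_j (x)` is eventually well defined (the
arguments of all the logarithms involved are eventually positive) and converges to
`log (w^{l+2}_{11})` as `x → +∞`. -/
theorem stmt_12 (L : ℕ) (hL : 1 ≤ L) (n : ℕ → ℕ) (hn0 : n 0 = 1) (hnL : n L = 1)
    (hpos : ∀ l ≤ L, 0 < n l) (w : ℕ → ℕ → ℕ → ℝ) (hw : Wo L n w)
    (l : ℕ) (hl : l + 2 ≤ L) :
    (∀ m < L - l, ∀ᶠ x in atTop, 0 < Real.log^[m] (expOut n w L 0 x)) ∧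
    Tendsto
      (fun x => Real.log^[L - l] (expOut n w L 0 x) -
        ∑ j ∈ Finset.range (n l), w (l + 1) 0 j * expOut n w l j x)
      atTop (nhds (Real.log (w (l + 2) 0 0))) := by
  have hF : Tendsto (expOut n w L 0) atTop atTop :=
    expOut_tendsto L n hpos w hw.1 L le_rfl 0 (hpos L le_rfl)
  constructor
  · intro m _
    exact (iter_log_tendsto hF m).eventually_gt_atTop 0
  · have hd : L - l = (L - l - 1) + 1 := by omega
    have hkey := key_lemma L n hpos w hw (L - l - 1) l (by omega)
    rw [if_neg (by omega : L - l - 1 ≠ 0)] at hkey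
    rw [hd]
    exact hkey
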